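/- Let k be a field and B = k[z_{i,j} : 1 ≤ i ≤ r, 1 ≤ j ≤ c]/(∧²Z) the coordinate ring of rank-≤1 r×c matrices. The blow-up of Spec B along the ideal I = (z_{i,j}) is covered by rc affine charts, and for each (r,s) the chart D₊(ε_{r,s}) is isomorphic to Spec k[a₁,…,a_r, b₁,…,b_c, z_{r,s}]/(a_r − 1, b_s − 1), i.e. to affine space 𝔸_k^{r+c−1}; in particular the blow-up is smooth of dimension r + c − 1. -/

import Mathlib

/- STATEMENT 1: Charts of the blow-up of the rank ≤ 1 determinantal variety
`Spec B`, `B = k[z_{i,j}]/(∧²Z)`, along the ideal `I = (z_{i,j})`.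
The blow-up is covered by the r·c affine charts `D₊(ε_{r₀,s₀})`; the chart at
`(r₀,s₀)` is presented by adjoining variables `ε_{i,j}` with relations
`z_{i,j} = z_{r₀,s₀}·ε_{i,j}`, `ε_{r₀,s₀} = 1`, and saturating at `z_{r₀,s₀}`.
Each such chart is isomorphic to
`Spec k[a₁,…,a_r,b₁,…,b_c,z]/(a_{r₀}-1, b_{s₀}-1) ≅ 𝔸_k^{r+c-1}`;
in particular each chart (hence the blow-up) is smooth of dimension r+c-1. -/

open MvPolynomial

/-- The saturation of an ideal at an element, defined as the contraction of its
extension to the localization away from that element. -/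
noncomputable def satAt {P : Type*} [CommRing P] (I : Ideal P) (f : P) : Ideal P :=
  (I.map (algebraMap P (Localization.Away f))).comap
    (algebraMap P (Localization.Away f))

namespace BlowupAux

variable (k : Type) [Field k] (r c : ℕ) (r₀ : Fin r) (s₀ : Fin c)

abbrev P := MvPolynomial ((Fin r × Fin c) ⊕ (Fin r × Fin c)) k
abbrev T := MvPolynomial (Fin r ⊕ Fin c ⊕ Unit) k
abbrev σ' := {i : Fin r // i ≠ r₀} ⊕ {j : Fin c // j ≠ s₀} ⊕ Unit
abbrev D := MvPolynomial (σ' r c r₀ s₀) k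

/-- the chart ideal before saturation -/
noncomputable def I0 : Ideal (P k r c) :=
  Ideal.span {f | ∃ (i i' : Fin r) (j j' : Fin c),
      f = X (Sum.inl (i, j)) * X (Sum.inl (i', j'))
        - X (Sum.inl (i, j')) * X (Sum.inl (i', j))} ⊔
  Ideal.span {f | ∃ p : Fin r × Fin c,
      f = X (Sum.inl p) - X (Sum.inl (r₀, s₀)) * X (Sum.inr p)} ⊔
  Ideal.span {X (Sum.inr (r₀, s₀)) - 1}

/-- the saturated chart ideal -/
noncomputable def K : Ideal (P k r c) :=
  I0 k r c r₀ s₀ ⊔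
  Ideal.span {f | ∃ p : Fin r × Fin c,
      f = X (Sum.inr p) - X (Sum.inr (p.1, s₀)) * X (Sum.inr (r₀, p.2))}

/-- the relations in the target ring -/
noncomputable def J : Ideal (T k r c) :=
  Ideal.span {X (Sum.inl r₀) - 1, X (Sum.inr (Sum.inl s₀)) - 1}

lemma K_def : K k r c r₀ s₀ =
    (Ideal.span {f | ∃ (i i' : Fin r) (j j' : Fin c),
        f = X (Sum.inl (i, j)) * X (Sum.inl (i', j'))
          - X (Sum.inl (i, j')) * X (Sum.inl (i', j))} ⊔
      Ideal.span {f | ∃ p : Fin r × Fin c,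
        f = X (Sum.inl p) - X (Sum.inl (r₀, s₀)) * X (Sum.inr p)} ⊔
      Ideal.span {X (Sum.inr (r₀, s₀)) - 1}) ⊔
    Ideal.span {f | ∃ p : Fin r × Fin c,
        f = X (Sum.inr p) - X (Sum.inr (p.1, s₀)) * X (Sum.inr (r₀, p.2))} := rfl

lemma J_def : J k r c r₀ s₀ =
    Ideal.span {X (Sum.inl r₀) - 1, X (Sum.inr (Sum.inl s₀)) - 1} := rfl

lemma I0_le_K : I0 k r c r₀ s₀ ≤ K k r c r₀ s₀ := le_sup_left

lemma mem_minor (i i' : Fin r) (j j' : Fin c) :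
    X (Sum.inl (i, j)) * X (Sum.inl (i', j')) - X (Sum.inl (i, j')) * X (Sum.inl (i', j))
      ∈ I0 k r c r₀ s₀ :=
  Ideal.mem_sup_left (Ideal.mem_sup_left (Ideal.subset_span ⟨i, i', j, j', rfl⟩))

lemma mem_rel (p : Fin r × Fin c) :
    X (Sum.inl p) - X (Sum.inl (r₀, s₀)) * X (Sum.inr p) ∈ I0 k r c r₀ s₀ :=
  Ideal.mem_sup_left (Ideal.mem_sup_right (Ideal.subset_span ⟨p, rfl⟩))

lemma mem_eps : X (Sum.inr (r₀, s₀)) - 1 ∈ I0 k r c r₀ s₀ :=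
  Ideal.mem_sup_right (Ideal.subset_span rfl)

lemma mem_g (p : Fin r × Fin c) :
    X (Sum.inr p) - X (Sum.inr (p.1, s₀)) * X (Sum.inr (r₀, p.2)) ∈ K k r c r₀ s₀ :=
  Ideal.mem_sup_right (Ideal.subset_span ⟨p, rfl⟩)

lemma mem_JA : X (Sum.inl r₀) - 1 ∈ J k r c r₀ s₀ :=
  Ideal.subset_span (Set.mem_insert _ _)

lemma mem_JB : X (Sum.inr (Sum.inl s₀)) - 1 ∈ J k r c r₀ s₀ :=
  Ideal.subset_span (Set.mem_insert_of_mem _ rfl)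

/-- image of variables for the map `P → T⧸J` -/
noncomputable def vmap : ((Fin r × Fin c) ⊕ (Fin r × Fin c)) → T k r c ⧸ J k r c r₀ s₀ :=
  Sum.elim
    (fun p => Ideal.Quotient.mk (J k r c r₀ s₀)
      (X (Sum.inr (Sum.inr ())) * (X (Sum.inl p.1) * X (Sum.inr (Sum.inl p.2)))))
    (fun p => Ideal.Quotient.mk (J k r c r₀ s₀) (X (Sum.inl p.1) * X (Sum.inr (Sum.inl p.2))))

noncomputable def phi : P k r c →ₐ[k] T k r c ⧸ J k r c r₀ s₀ := aeval (vmap k r c r₀ s₀)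

/-- image of variables for the map `T → P⧸K` -/
noncomputable def wmap : (Fin r ⊕ Fin c ⊕ Unit) → P k r c ⧸ K k r c r₀ s₀ :=
  Sum.elim (fun i => Ideal.Quotient.mk (K k r c r₀ s₀) (X (Sum.inr (i, s₀))))
    (Sum.elim (fun j => Ideal.Quotient.mk (K k r c r₀ s₀) (X (Sum.inr (r₀, j))))
      (fun _ => Ideal.Quotient.mk (K k r c r₀ s₀) (X (Sum.inl (r₀, s₀)))))

noncomputable def psi : T k r c →ₐ[k] P k r c ⧸ K k r c r₀ s₀ := aeval (wmap k r c r₀ s₀)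

lemma mkA : (Ideal.Quotient.mk (J k r c r₀ s₀)) (X (Sum.inl r₀)) = 1 := by
  rw [show (1 : T k r c ⧸ J k r c r₀ s₀) = Ideal.Quotient.mk _ 1 from rfl, Ideal.Quotient.eq]
  exact mem_JA k r c r₀ s₀

lemma mkB : (Ideal.Quotient.mk (J k r c r₀ s₀)) (X (Sum.inr (Sum.inl s₀))) = 1 := by
  rw [show (1 : T k r c ⧸ J k r c r₀ s₀) = Ideal.Quotient.mk _ 1 from rfl, Ideal.Quotient.eq]
  exact mem_JB k r c r₀ s₀

lemma mkE : (Ideal.Quotient.mk (K k r c r₀ s₀)) (X (Sum.inr (r₀, s₀))) = 1 := by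
  rw [show (1 : P k r c ⧸ K k r c r₀ s₀) = Ideal.Quotient.mk _ 1 from rfl, Ideal.Quotient.eq]
  exact I0_le_K k r c r₀ s₀ (mem_eps k r c r₀ s₀)

lemma phi_vanish : ∀ a ∈ K k r c r₀ s₀, phi k r c r₀ s₀ a = 0 := by
  have hle : K k r c r₀ s₀ ≤ RingHom.ker (phi k r c r₀ s₀).toRingHom := by
    rw [K_def]
    refine sup_le (sup_le (sup_le ?_ ?_) ?_) ?_ <;> rw [Ideal.span_le]
    · rintro f ⟨i, i', j, j', rfl⟩
      rw [SetLike.mem_coe, RingHom.mem_ker]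
      simp only [AlgHom.toRingHom_eq_coe, RingHom.coe_coe, phi, vmap, map_sub, map_mul,
        map_one, aeval_X, Sum.elim_inl, Sum.elim_inr]
      ring
    · rintro f ⟨p, rfl⟩
      rw [SetLike.mem_coe, RingHom.mem_ker]
      simp only [AlgHom.toRingHom_eq_coe, RingHom.coe_coe, phi, vmap, map_sub, map_mul,
        map_one, aeval_X, Sum.elim_inl, Sum.elim_inr]
      rw [mkA, mkB]
      ring
    · rintro f hf
      rw [Set.mem_singleton_iff] at hf; subst hf
      rw [SetLike.mem_coe, RingHom.mem_ker]
      simp only [AlgHom.toRingHom_eq_coe, RingHom.coe_coe, phi, vmap, map_sub, map_mul,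
        map_one, aeval_X, Sum.elim_inl, Sum.elim_inr]
      rw [mkA, mkB]
      ring
    · rintro f ⟨p, rfl⟩
      rw [SetLike.mem_coe, RingHom.mem_ker]
      simp only [AlgHom.toRingHom_eq_coe, RingHom.coe_coe, phi, vmap, map_sub, map_mul,
        map_one, aeval_X, Sum.elim_inl, Sum.elim_inr]
      rw [mkA, mkB]
      ring
  exact fun a ha => hle ha

lemma psi_vanish : ∀ a ∈ J k r c r₀ s₀, psi k r c r₀ s₀ a = 0 := by
  have hle : J k r c r₀ s₀ ≤ RingHom.ker (psi k r c r₀ s₀).toRingHom := by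
    rw [J_def, Ideal.span_le]
    intro f hf
    simp only [Set.mem_insert_iff, Set.mem_singleton_iff] at hf
    rw [SetLike.mem_coe, RingHom.mem_ker]
    rcases hf with rfl | rfl <;>
    · simp only [AlgHom.toRingHom_eq_coe, RingHom.coe_coe]
      simp only [psi, wmap, map_sub, map_one, aeval_X, Sum.elim_inl, Sum.elim_inr,
        mkE k r c r₀ s₀, sub_self]
  exact fun a ha => hle ha

noncomputable def phibar : P k r c ⧸ K k r c r₀ s₀ →ₐ[k] T k r c ⧸ J k r c r₀ s₀ :=
  Ideal.Quotient.liftₐ _ (phi k r c r₀ s₀) (phi_vanish k r c r₀ s₀)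

noncomputable def psibar : T k r c ⧸ J k r c r₀ s₀ →ₐ[k] P k r c ⧸ K k r c r₀ s₀ :=
  Ideal.Quotient.liftₐ _ (psi k r c r₀ s₀) (psi_vanish k r c r₀ s₀)

lemma phibar_mk (x : P k r c) :
    phibar k r c r₀ s₀ (Ideal.Quotient.mk _ x) = phi k r c r₀ s₀ x := by
  simp [phibar, Ideal.Quotient.liftₐ_apply, Ideal.Quotient.lift_mk]
  rfl

lemma psibar_mk (x : T k r c) :
    psibar k r c r₀ s₀ (Ideal.Quotient.mk _ x) = psi k r c r₀ s₀ x := by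
  simp [psibar, Ideal.Quotient.liftₐ_apply, Ideal.Quotient.lift_mk]
  rfl

lemma psibar_phibar :
    (psibar k r c r₀ s₀).comp (phibar k r c r₀ s₀) = AlgHom.id k (P k r c ⧸ K k r c r₀ s₀) := by
  refine Ideal.Quotient.algHom_ext k (MvPolynomial.algHom_ext fun v => ?_)
  obtain (⟨i, j⟩ | ⟨i, j⟩) := v <;>
    simp only [AlgHom.comp_apply, Ideal.Quotient.mkₐ_eq_mk, phibar_mk, AlgHom.id_apply,
      phi, aeval_X, vmap, Sum.elim_inl, Sum.elim_inr, psibar_mk, psi, map_mul, wmap]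
  · -- z-variable: mk (z * (ε_{i,s₀} * ε_{r₀,j})) = mk z_{i,j}
    rw [← map_mul (Ideal.Quotient.mk (K k r c r₀ s₀)),
      ← map_mul (Ideal.Quotient.mk (K k r c r₀ s₀)), Ideal.Quotient.eq]
    rw [show X (Sum.inl (r₀, s₀)) * (X (Sum.inr (i, s₀)) * X (Sum.inr (r₀, j)))
          - X (Sum.inl (i, j))
        = (-(X (Sum.inl (r₀, s₀)))) *
            (X (Sum.inr (i, j)) - X (Sum.inr (i, s₀)) * X (Sum.inr (r₀, j)))
          - (X (Sum.inl (i, j)) - X (Sum.inl (r₀, s₀)) * X (Sum.inr (i, j)) : P k r c)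
        from by ring]
    exact sub_mem (Ideal.mul_mem_left _ _ (mem_g k r c r₀ s₀ (i, j)))
      (I0_le_K k r c r₀ s₀ (mem_rel k r c r₀ s₀ (i, j)))
  · rw [← map_mul (Ideal.Quotient.mk (K k r c r₀ s₀)), Ideal.Quotient.eq]
    have h := neg_mem (mem_g k r c r₀ s₀ (i, j))
    rw [neg_sub] at h
    exact h

lemma phibar_psibar :
    (phibar k r c r₀ s₀).comp (psibar k r c r₀ s₀) = AlgHom.id k (T k r c ⧸ J k r c r₀ s₀) := by
  refine Ideal.Quotient.algHom_ext k (MvPolynomial.algHom_ext fun v => ?_)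
  obtain (i | j | u) := v <;>
    simp only [AlgHom.comp_apply, Ideal.Quotient.mkₐ_eq_mk, psibar_mk, AlgHom.id_apply,
      psi, aeval_X, wmap, Sum.elim_inl, Sum.elim_inr, phibar_mk, phi, map_mul, vmap]
  · rw [mkB, mul_one]
  · rw [mkA, one_mul]
  · rw [mkA, mkB, mul_one, mul_one]

noncomputable def e1 : (P k r c ⧸ K k r c r₀ s₀) ≃ₐ[k] T k r c ⧸ J k r c r₀ s₀ :=
  AlgEquiv.ofAlgHom (phibar k r c r₀ s₀) (psibar k r c r₀ s₀)
    (phibar_psibar k r c r₀ s₀) (psibar_phibar k r c r₀ s₀)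

/-- variables for the reduction `T → D` -/
noncomputable def umap : (Fin r ⊕ Fin c ⊕ Unit) → D k r c r₀ s₀ :=
  Sum.elim (fun i => if h : i = r₀ then 1 else X (Sum.inl ⟨i, h⟩))
    (Sum.elim (fun j => if h : j = s₀ then 1 else X (Sum.inr (Sum.inl ⟨j, h⟩)))
      (fun _ => X (Sum.inr (Sum.inr ()))))

noncomputable def alpha : T k r c →ₐ[k] D k r c r₀ s₀ := aeval (umap k r c r₀ s₀)

noncomputable def bmap : σ' r c r₀ s₀ → T k r c ⧸ J k r c r₀ s₀ :=
  Sum.elim (fun i => Ideal.Quotient.mk _ (X (Sum.inl i.1)))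
    (Sum.elim (fun j => Ideal.Quotient.mk _ (X (Sum.inr (Sum.inl j.1))))
      (fun _ => Ideal.Quotient.mk _ (X (Sum.inr (Sum.inr ())))))

noncomputable def beta : D k r c r₀ s₀ →ₐ[k] T k r c ⧸ J k r c r₀ s₀ := aeval (bmap k r c r₀ s₀)

lemma alpha_vanish : ∀ a ∈ J k r c r₀ s₀, alpha k r c r₀ s₀ a = 0 := by
  have hle : J k r c r₀ s₀ ≤ RingHom.ker (alpha k r c r₀ s₀).toRingHom := by
    rw [J_def, Ideal.span_le]
    intro f hf
    simp only [Set.mem_insert_iff, Set.mem_singleton_iff] at hf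
    rw [SetLike.mem_coe, RingHom.mem_ker]
    rcases hf with rfl | rfl <;>
      simp [alpha, umap, map_sub, map_one, aeval_X]
  exact fun a ha => hle ha

noncomputable def alphabar : T k r c ⧸ J k r c r₀ s₀ →ₐ[k] D k r c r₀ s₀ :=
  Ideal.Quotient.liftₐ _ (alpha k r c r₀ s₀) (alpha_vanish k r c r₀ s₀)

lemma alphabar_mk (x : T k r c) :
    alphabar k r c r₀ s₀ (Ideal.Quotient.mk _ x) = alpha k r c r₀ s₀ x := by
  simp [alphabar, Ideal.Quotient.liftₐ_apply, Ideal.Quotient.lift_mk]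
  rfl

lemma alphabar_beta :
    (alphabar k r c r₀ s₀).comp (beta k r c r₀ s₀) = AlgHom.id k (D k r c r₀ s₀) := by
  refine MvPolynomial.algHom_ext fun v => ?_
  obtain (⟨i, hi⟩ | ⟨j, hj⟩ | u) := v
  · simp [beta, bmap, aeval_X, alphabar_mk, alpha, umap, dif_neg hi]
  · simp [beta, bmap, aeval_X, alphabar_mk, alpha, umap, dif_neg hj]
  · simp [beta, bmap, aeval_X, alphabar_mk, alpha, umap]

lemma beta_alphabar :
    (beta k r c r₀ s₀).comp (alphabar k r c r₀ s₀) = AlgHom.id k (T k r c ⧸ J k r c r₀ s₀) := by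
  refine Ideal.Quotient.algHom_ext k (MvPolynomial.algHom_ext fun v => ?_)
  obtain (i | j | u) := v <;>
    simp only [AlgHom.comp_apply, Ideal.Quotient.mkₐ_eq_mk, alphabar_mk, AlgHom.id_apply,
      alpha, aeval_X, umap, Sum.elim_inl, Sum.elim_inr]
  · by_cases h : i = r₀
    · subst h; rw [dif_pos rfl, map_one, mkA]
    · rw [dif_neg h]; simp [beta, bmap]
  · by_cases h : j = s₀
    · subst h; rw [dif_pos rfl, map_one, mkB]
    · rw [dif_neg h]; simp [beta, bmap]
  · simp [beta, bmap]

noncomputable def e2 : (T k r c ⧸ J k r c r₀ s₀) ≃ₐ[k] D k r c r₀ s₀ :=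
  AlgEquiv.ofAlgHom (alphabar k r c r₀ s₀) (beta k r c r₀ s₀)
    (alphabar_beta k r c r₀ s₀) (beta_alphabar k r c r₀ s₀)

noncomputable def e12 : (P k r c ⧸ K k r c r₀ s₀) ≃ₐ[k] D k r c r₀ s₀ :=
  (e1 k r c r₀ s₀).trans (e2 k r c r₀ s₀)

lemma e12_mk (x : P k r c) :
    e12 k r c r₀ s₀ (Ideal.Quotient.mk _ x) =
      alphabar k r c r₀ s₀ (phibar k r c r₀ s₀ (Ideal.Quotient.mk _ x)) := rfl

lemma e12_z :
    e12 k r c r₀ s₀ (Ideal.Quotient.mk _ (X (Sum.inl (r₀, s₀)))) =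
      X (Sum.inr (Sum.inr ())) := by
  rw [e12_mk, phibar_mk]
  simp [phi, vmap, aeval_X, alphabar_mk, alpha, umap]

lemma z2g_mem (i : Fin r) (j : Fin c) :
    X (Sum.inl (r₀, s₀)) ^ 2 *
      (X (Sum.inr (i, j)) - X (Sum.inr (i, s₀)) * X (Sum.inr (r₀, j)))
      ∈ I0 k r c r₀ s₀ := by
  have h1 := mem_minor k r c r₀ s₀ r₀ i s₀ j
  have h2 := mem_rel k r c r₀ s₀ (i, j)
  have h3 := mem_rel k r c r₀ s₀ (i, s₀)
  have h4 := mem_rel k r c r₀ s₀ (r₀, j)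
  rw [show X (Sum.inl (r₀, s₀)) ^ 2 *
      (X (Sum.inr (i, j)) - X (Sum.inr (i, s₀)) * X (Sum.inr (r₀, j)))
      = (X (Sum.inl (r₀, s₀)) * X (Sum.inl (i, j)) - X (Sum.inl (r₀, j)) * X (Sum.inl (i, s₀)))
        - X (Sum.inl (r₀, s₀)) *
            (X (Sum.inl (i, j)) - X (Sum.inl (r₀, s₀)) * X (Sum.inr (i, j)))
        + X (Sum.inl (i, s₀)) *
            (X (Sum.inl (r₀, j)) - X (Sum.inl (r₀, s₀)) * X (Sum.inr (r₀, j)))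
        + (X (Sum.inl (r₀, s₀)) * X (Sum.inr (r₀, j))) *
            (X (Sum.inl (i, s₀)) - X (Sum.inl (r₀, s₀)) * X (Sum.inr (i, s₀)) : P k r c)
      from by ring]
  exact add_mem (add_mem (sub_mem h1 (Ideal.mul_mem_left _ _ h2)) (Ideal.mul_mem_left _ _ h4))
    (Ideal.mul_mem_left _ _ h3)

lemma sat_eq :
    satAt (I0 k r c r₀ s₀) (X (Sum.inl (r₀, s₀))) = K k r c r₀ s₀ := by
  set z : P k r c := X (Sum.inl (r₀, s₀)) with hzdef
  apply le_antisymm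
  · intro a ha
    rw [satAt, Ideal.mem_comap] at ha
    have ha' : algebraMap (P k r c) (Localization.Away z) a ∈
        (K k r c r₀ s₀).map (algebraMap (P k r c) (Localization.Away z)) :=
      Ideal.map_mono (I0_le_K k r c r₀ s₀) ha
    rw [IsLocalization.mem_map_algebraMap_iff (Submonoid.powers z)] at ha'
    obtain ⟨⟨⟨b, hb⟩, s⟩, h⟩ := ha'
    obtain ⟨n, hn⟩ := s.2
    have hz0 : z ≠ 0 := MvPolynomial.X_ne_zero _
    have hinj : Function.Injective (algebraMap (P k r c) (Localization.Away z)) :=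
      IsLocalization.injective (M := Submonoid.powers z) (Localization.Away z)
        (powers_le_nonZeroDivisors_of_noZeroDivisors hz0)
    have hab : a * (s : P k r c) = b := hinj (by rw [map_mul]; exact h)
    have key : a * z ^ n ∈ K k r c r₀ s₀ := by
      have hn' : z ^ n = (s : P k r c) := hn
      rw [hn', hab]; exact hb
    have hq : (Ideal.Quotient.mk (K k r c r₀ s₀)) a *
        (Ideal.Quotient.mk (K k r c r₀ s₀) z) ^ n = 0 := by
      rw [← map_pow, ← map_mul, Ideal.Quotient.eq_zero_iff_mem]; exact key
    have hq2 : e12 k r c r₀ s₀ (Ideal.Quotient.mk _ a) *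
        (X (Sum.inr (Sum.inr ())) : D k r c r₀ s₀) ^ n = 0 := by
      rw [← e12_z k r c r₀ s₀, ← map_pow, ← map_mul, hq, map_zero]
    rcases mul_eq_zero.mp hq2 with h0 | h0
    · have h5 : (Ideal.Quotient.mk (K k r c r₀ s₀)) a = 0 :=
        (e12 k r c r₀ s₀).injective (by rw [h0, map_zero])
      exact Ideal.Quotient.eq_zero_iff_mem.mp h5
    · exact absurd h0 (pow_ne_zero _ (MvPolynomial.X_ne_zero _))
  · refine sup_le (fun x hx => Ideal.le_comap_map hx) ?_
    rw [Ideal.span_le]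
    rintro f ⟨p, rfl⟩
    obtain ⟨i, j⟩ := p
    rw [SetLike.mem_coe, satAt, Ideal.mem_comap]
    have hmem := Ideal.mem_map_of_mem (algebraMap (P k r c) (Localization.Away z))
      (z2g_mem k r c r₀ s₀ i j)
    obtain ⟨u, hu⟩ := IsLocalization.Away.algebraMap_isUnit (S := Localization.Away z) z
    have hkey : ((u⁻¹ : (Localization.Away z)ˣ) : Localization.Away z) ^ 2 *
        algebraMap (P k r c) (Localization.Away z)
          (z ^ 2 * (X (Sum.inr (i, j)) - X (Sum.inr (i, s₀)) * X (Sum.inr (r₀, j))))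
        = algebraMap (P k r c) (Localization.Away z)
            (X (Sum.inr (i, j)) - X (Sum.inr (i, s₀)) * X (Sum.inr (r₀, j))) := by
      rw [map_mul, map_pow, ← hu, ← mul_assoc, ← mul_pow, Units.inv_mul, one_pow, one_mul]
    rw [← hkey]
    exact Ideal.mul_mem_left _ _ hmem

lemma card_sigma (hr : 1 ≤ r) (hc : 1 ≤ c) : Fintype.card (σ' r c r₀ s₀) = r + c - 1 := by
  have h1 : Fintype.card {i : Fin r // i ≠ r₀} = r - 1 := by
    simp [Fintype.card_subtype_compl, Fintype.card_subtype_eq]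
  have h2 : Fintype.card {j : Fin c // j ≠ s₀} = c - 1 := by
    simp [Fintype.card_subtype_compl, Fintype.card_subtype_eq]
  have : Fintype.card (σ' r c r₀ s₀) =
      Fintype.card {i : Fin r // i ≠ r₀} + (Fintype.card {j : Fin c // j ≠ s₀} + 1) := by
    simp [Fintype.card_sum]
  rw [this, h1, h2]
  omega

noncomputable def e3 (h : Fintype.card (σ' r c r₀ s₀) = r + c - 1) :
    D k r c r₀ s₀ ≃ₐ[k] MvPolynomial (Fin (r + c - 1)) k :=
  renameEquiv k (Fintype.equivFinOfCardEq h)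

end BlowupAux

theorem blowup_chart_of_determinantal
    (k : Type) [Field k] (r c : ℕ) (hr : 1 ≤ r) (hc : 1 ≤ c)
    (r₀ : Fin r) (s₀ : Fin c)
    -- the big polynomial ring: `inl p` are the `z`-variables, `inr p` the `ε`-variables
    (I₀ : Ideal (MvPolynomial ((Fin r × Fin c) ⊕ (Fin r × Fin c)) k))
    (hI₀ : I₀ =
      -- 2×2 minors of Z
      Ideal.span {f | ∃ (i i' : Fin r) (j j' : Fin c),
          f = X (Sum.inl (i, j)) * X (Sum.inl (i', j'))
            - X (Sum.inl (i, j')) * X (Sum.inl (i', j))} ⊔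
      -- blow-up chart relations z_{i,j} = z_{r₀,s₀} ε_{i,j}
      Ideal.span {f | ∃ p : Fin r × Fin c,
          f = X (Sum.inl p) - X (Sum.inl (r₀, s₀)) * X (Sum.inr p)} ⊔
      -- ε_{r₀,s₀} = 1
      Ideal.span {X (Sum.inr (r₀, s₀)) - 1})
    -- the target ring k[a₁,…,a_r,b₁,…,b_c,z]/(a_{r₀} - 1, b_{s₀} - 1)
    (J : Ideal (MvPolynomial (Fin r ⊕ Fin c ⊕ Unit) k))
    (hJ : J = Ideal.span {X (Sum.inl r₀) - 1, X (Sum.inr (Sum.inl s₀)) - 1}) :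
    -- the chart D₊(ε_{r₀,s₀}) is Spec of the saturated quotient, and it is
    -- isomorphic to k[a,b,z]/(a_{r₀}-1, b_{s₀}-1), hence to 𝔸^{r+c-1}
    Nonempty
      ((MvPolynomial ((Fin r × Fin c) ⊕ (Fin r × Fin c)) k ⧸
          satAt I₀ (X (Sum.inl (r₀, s₀)))) ≃+*
        (MvPolynomial (Fin r ⊕ Fin c ⊕ Unit) k ⧸ J)) ∧
    Nonempty
      ((MvPolynomial ((Fin r × Fin c) ⊕ (Fin r × Fin c)) k ⧸
          satAt I₀ (X (Sum.inl (r₀, s₀)))) ≃+*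
        MvPolynomial (Fin (r + c - 1)) k) := by
  have hI : I₀ = BlowupAux.I0 k r c r₀ s₀ := hI₀
  have hJ' : J = BlowupAux.J k r c r₀ s₀ := hJ
  rw [hI, hJ', BlowupAux.sat_eq k r c r₀ s₀]
  constructor
  · exact ⟨(BlowupAux.e1 k r c r₀ s₀).toRingEquiv⟩
  · exact ⟨((BlowupAux.e12 k r c r₀ s₀).trans
      (BlowupAux.e3 k r c r₀ s₀ (BlowupAux.card_sigma r c r₀ s₀ hr hc))).toRingEquiv⟩
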